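/- Let γ > (1 + √5)/2 be real. Set s := √(γ² − 1), t := √(1 + γ − γ² + (γ − 1)s), D := −1 − 3γ + 2γ² + (3 − 2γ)s, α := (γ² − 2)/(−8 − γ + 6γ² − γ³ + (−6 + 3γ + γ²)s), and define vectors v₁, …, v₅ ∈ ℝ² by vⱼ = √α · (p₁ⱼ, p₂ⱼ), where p₁₁ = D·t/(−2 − γD), p₁₂ = t/γ, p₁₃ = −s/((1+γ)t), p₁₄ = (1 − γ² − γs)·t/(γ + γ²), p₁₅ = −2(γ−1)t/(γ(2 + γD)), p₂₁ = p₂₂ = p₂₄ = 0, p₂₃ = (1 + γ + s)/(1 + γ), p₂₅ = 1. Then the following six inequalities hold: (1) ⟨v₃, v₅ − v₃ − v₂⟩ ≥ 0; (2) ⟨v₂, v₅ + (γ−1)(v₁+v₂)⟩ ≥ 0; (3) ⟨v₄, v₅ − v₃ − v₄⟩ ≥ 0; (4) ⟨v₂ − v₄, (v₃+v₄) + (γ−1)(v₁+v₂)⟩ ≥ 0; (5) ⟨v₄, −(v₃+v₄) − (γ−1)(v₁+v₂)⟩ + ⟨v₂, v₅ + (γ−1)(v₁+v₂)⟩ ≥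 0; (6) ⟨v₂, (v₃+v₄) + (γ−1)(v₁+v₂)⟩ + ⟨v₄, v₅ − v₃ − v₄⟩ ≥ 0; and moreover the normalization ‖v₅‖² + γ‖v₂‖² + (γ−1)‖v₁ + v₂‖² = 1 holds. (Feasibility of the constructed rank-two solution X_f = αP̄ᵀP̄ for the performance-estimation SDP.) -/

import Mathlib

open Matrix

noncomputable section

set_option maxHeartbeats 4000000 in
/-- Feasibility of the constructed rank-two solution for the performance-estimation SDP:
the vectors `v₁, …, v₅ ∈ ℝ²` built from the matrix `P̄` scaled by `√α` satisfy the six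
cyclic-monotonicity inequalities and the normalization `Rᵏ = 1`. -/
theorem rank_two_solution_feasible
    (γ : ℝ) (hγ : (1 + Real.sqrt 5) / 2 < γ)
    (s t D α : ℝ)
    (hs : s = Real.sqrt (γ ^ 2 - 1))
    (ht : t = Real.sqrt (1 + γ - γ ^ 2 + (γ - 1) * s))
    (hD : D = -1 - 3 * γ + 2 * γ ^ 2 + (3 - 2 * γ) * s)
    (hα : α = (γ ^ 2 - 2) / (-8 - γ + 6 * γ ^ 2 - γ ^ 3 + (-6 + 3 * γ + γ ^ 2) * s))
    (v₁ v₂ v₃ v₄ v₅ : Fin 2 → ℝ)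
    (hv₁ : v₁ = Real.sqrt α • ![D * t / (-2 - γ * D), 0])
    (hv₂ : v₂ = Real.sqrt α • ![t / γ, 0])
    (hv₃ : v₃ = Real.sqrt α • ![-s / ((1 + γ) * t), (1 + γ + s) / (1 + γ)])
    (hv₄ : v₄ = Real.sqrt α • ![(1 - γ ^ 2 - γ * s) * t / (γ + γ ^ 2), 0])
    (hv₅ : v₅ = Real.sqrt α • ![-2 * (γ - 1) * t / (γ * (2 + γ * D)), 1]) :
    0 ≤ v₃ ⬝ᵥ (v₅ - v₃ - v₂) ∧
    0 ≤ v₂ ⬝ᵥ (v₅ + (γ - 1) • (v₁ + v₂)) ∧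
    0 ≤ v₄ ⬝ᵥ (v₅ - v₃ - v₄) ∧
    0 ≤ (v₂ - v₄) ⬝ᵥ ((v₃ + v₄) + (γ - 1) • (v₁ + v₂)) ∧
    0 ≤ v₄ ⬝ᵥ (-(v₃ + v₄) - (γ - 1) • (v₁ + v₂)) + v₂ ⬝ᵥ (v₅ + (γ - 1) • (v₁ + v₂)) ∧
    0 ≤ v₂ ⬝ᵥ ((v₃ + v₄) + (γ - 1) • (v₁ + v₂)) + v₄ ⬝ᵥ (v₅ - v₃ - v₄) ∧
    v₅ ⬝ᵥ v₅ + γ * (v₂ ⬝ᵥ v₂) + (γ - 1) * ((v₁ + v₂) ⬝ᵥ (v₁ + v₂)) = 1 := by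
  have h5 : Real.sqrt 5 ^ 2 = 5 := Real.sq_sqrt (by norm_num)
  have h5n : Real.sqrt 5 ≥ 0 := Real.sqrt_nonneg 5
  have hg16 : (1.6 : ℝ) < γ := by nlinarith
  have hu : γ + 1 < γ ^ 2 := by nlinarith
  have hs2 : s ^ 2 = γ ^ 2 - 1 := by rw [hs]; exact Real.sq_sqrt (by nlinarith)
  have hs0 : 0 < s := by rw [hs]; exact Real.sqrt_pos.mpr (by nlinarith)
  have harg : 0 < 1 + γ - γ ^ 2 + (γ - 1) * s := by nlinarith [sq_nonneg ((γ-1)*s - (γ^2-γ-1)), sq_nonneg ((γ-1)*s + (γ^2-γ-1)), mul_pos (by nlinarith : (0:ℝ) < γ - 1) hs0]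
  have ht2 : t ^ 2 = 1 + γ - γ ^ 2 + (γ - 1) * s := by rw [ht]; exact Real.sq_sqrt harg.le
  have ht0 : 0 < t := by rw [ht]; exact Real.sqrt_pos.mpr harg
  have hgd : 0 < 2 + γ * D := by
    rw [hD]
    nlinarith [sq_nonneg ((2*γ^3-3*γ^2-γ+2) - (2*γ^2-3*γ)*s), sq_nonneg ((2*γ^3-3*γ^2-γ+2) + (2*γ^2-3*γ)*s), mul_pos (by nlinarith : (0:ℝ) < 2*γ^2-3*γ) hs0]
  have hden : 0 < -8 - γ + 6 * γ ^ 2 - γ ^ 3 + (-6 + 3 * γ + γ ^ 2) * s := by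
    have hc : 0 < -6 + 3*γ + γ^2 := by nlinarith
    rcases le_or_gt 0 (-8 - γ + 6 * γ ^ 2 - γ ^ 3) with hd | hd
    · nlinarith [mul_pos hc hs0]
    · nlinarith [mul_pos hc hs0, sq_nonneg ((-6+3*γ+γ^2)*s + (-8 - γ + 6 * γ ^ 2 - γ ^ 3)), sq_nonneg ((-6+3*γ+γ^2)*s - (-8 - γ + 6 * γ ^ 2 - γ ^ 3)), mul_pos (mul_pos hs0 hs0) hs0]
  have hγ0 : γ ≠ 0 := by positivity
  have h1γ : (1 : ℝ) + γ ≠ 0 := by positivity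
  have ht0' : t ≠ 0 := ne_of_gt ht0
  have hgd' : 2 + γ * D ≠ 0 := ne_of_gt hgd
  have hgd'' : -2 - γ * D ≠ 0 := by intro h; apply hgd'; linarith
  have hα0 : 0 ≤ α := by rw [hα]; apply div_nonneg (by nlinarith) hden.le
  have hsq : Real.sqrt α ^ 2 = α := Real.sq_sqrt hα0
  have hαden : α * (-8 - γ + 6 * γ ^ 2 - γ ^ 3 + (-6 + 3 * γ + γ ^ 2) * s) = γ ^ 2 - 2 := by
    rw [hα]; exact div_mul_cancel₀ _ hden.ne'
  have q1 : v₃ ⬝ᵥ (v₅ - v₃ - v₂) = 0 := by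
    simp only [hv₁, hv₂, hv₃, hv₄, hv₅, dotProduct, Fin.sum_univ_two, Pi.add_apply,
      Pi.sub_apply, Pi.smul_apply, Pi.neg_apply, smul_eq_mul, Matrix.cons_val_zero,
      Matrix.cons_val_one, Matrix.head_cons]
    field_simp
    linear_combination ((1)*(Real.sqrt α)^2*γ*s*t^2 + (-1)*(Real.sqrt α)^2*γ^2*s^2 + (-1)*(Real.sqrt α)^2*γ^2*s^2*t^2 + (-1)*(Real.sqrt α)^2*γ^3*s*t^2) * hD + ((-1)*(Real.sqrt α)^2*γ*s + (1)*(Real.sqrt α)^2*γ*s^2 + (-3)*(Real.sqrt α)^2*γ^2*s + (-1)*(Real.sqrt α)^2*γ^2*s^2 + (-3)*(Real.sqrt α)^2*γ^2*s^3 + (3)*(Real.sqrt α)^2*γ^3*s + (2)*(Real.sqrt α)^2*γ^3*s^3 + (3)*(Real.sqrt α)^2*γ^4*s + (-2)*(Real.sqrt α)^2*γ^5*s) * ht2 + ((-1)*(Real.sqrt α)^2*γ*s + (-4)*(Real.sqrt α)^2*γ^2*s + (3)*(Real.sqrt α)^2*γ^2*s^2 + (-5)*(Real.sqrt α)^2*γ^3*s^2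 + (5)*(Real.sqrt α)^2*γ^4*s + (2)*(Real.sqrt α)^2*γ^4*s^2 + (-2)*(Real.sqrt α)^2*γ^5*s) * hs2
  have q2 : v₂ ⬝ᵥ (v₅ + (γ - 1) • (v₁ + v₂)) = 0 := by
    simp only [hv₁, hv₂, hv₃, hv₄, hv₅, dotProduct, Fin.sum_univ_two, Pi.add_apply,
      Pi.sub_apply, Pi.smul_apply, Pi.neg_apply, smul_eq_mul, Matrix.cons_val_zero,
      Matrix.cons_val_one, Matrix.head_cons]
    field_simp
    linear_combination 0
  have q3 : v₄ ⬝ᵥ (v₅ - v₃ - v₄) = 0 := by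
    simp only [hv₁, hv₂, hv₃, hv₄, hv₅, dotProduct, Fin.sum_univ_two, Pi.add_apply,
      Pi.sub_apply, Pi.smul_apply, Pi.neg_apply, smul_eq_mul, Matrix.cons_val_zero,
      Matrix.cons_val_one, Matrix.head_cons]
    field_simp
    linear_combination ((-1)*(Real.sqrt α)^2*γ*t^2 + (1)*(Real.sqrt α)^2*γ^2*s + (2)*(Real.sqrt α)^2*γ^2*s*t^2 + (2)*(Real.sqrt α)^2*γ^3*t^2 + (-1)*(Real.sqrt α)^2*γ^3*s^2 + (-1)*(Real.sqrt α)^2*γ^3*s^2*t^2 + (-1)*(Real.sqrt α)^2*γ^4*s + (-2)*(Real.sqrt α)^2*γ^4*s*t^2 + (-1)*(Real.sqrt α)^2*γ^5*t^2) * hD + ((1)*(Real.sqrt α)^2*γ + (-1)*(Real.sqrt α)^2*γ*s + (3)*(Real.sqrt α)^2*γ^2 + (4)*(Real.sqrt α)^2*γ^2*s^2 + (-4)*(Real.sqrt α)^2*γ^3 + (-2)*(Real.sqrt α)^2*γ^3*s + (-3)*(Real.sqrt α)^2*γ^3*s^2 + (-3)*(Real.sqrt α)^2*γ^3*s^3 +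 (-6)*(Real.sqrt α)^2*γ^4 + (2)*(Real.sqrt α)^2*γ^4*s + (-3)*(Real.sqrt α)^2*γ^4*s^2 + (2)*(Real.sqrt α)^2*γ^4*s^3 + (5)*(Real.sqrt α)^2*γ^5 + (3)*(Real.sqrt α)^2*γ^5*s + (2)*(Real.sqrt α)^2*γ^5*s^2 + (3)*(Real.sqrt α)^2*γ^6 + (-2)*(Real.sqrt α)^2*γ^6*s + (-2)*(Real.sqrt α)^2*γ^7) * ht2 + ((1)*(Real.sqrt α)^2*γ + (4)*(Real.sqrt α)^2*γ^2 + (-4)*(Real.sqrt α)^2*γ^2*s + (-1)*(Real.sqrt α)^2*γ^3 + (1)*(Real.sqrt α)^2*γ^3*s + (3)*(Real.sqrt α)^2*γ^3*s^2 + (-9)*(Real.sqrt α)^2*γ^4 + (1)*(Real.sqrt α)^2*γ^4*s + (-5)*(Real.sqrt α)^2*γ^4*s^2 + (2)*(Real.sqrt α)^2*γ^5 + (2)*(Real.sqrt α)^2*γ^5*s^2 + (5)*(Real.sqrt α)^2*γ^6 + (-2)*(Real.sqrt α)^2*γ^7) * hs2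
  have q4 : (v₂ - v₄) ⬝ᵥ ((v₃ + v₄) + (γ - 1) • (v₁ + v₂)) = 0 := by
    simp only [hv₁, hv₂, hv₃, hv₄, hv₅, dotProduct, Fin.sum_univ_two, Pi.add_apply,
      Pi.sub_apply, Pi.smul_apply, Pi.neg_apply, smul_eq_mul, Matrix.cons_val_zero,
      Matrix.cons_val_one, Matrix.head_cons]
    field_simp
    linear_combination ((-1)*(Real.sqrt α)^2*γ^2*t^2 + (-1)*(Real.sqrt α)^2*γ^2*s*t^2 + (-1)*(Real.sqrt α)^2*γ^3*t^2 + (1)*(Real.sqrt α)^2*γ^3*s + (1)*(Real.sqrt α)^2*γ^3*s*t^2 + (1)*(Real.sqrt α)^2*γ^3*s^2 + (1)*(Real.sqrt α)^2*γ^3*s^2*t^2 + (1)*(Real.sqrt α)^2*γ^4*t^2 + (1)*(Real.sqrt α)^2*γ^4*s + (2)*(Real.sqrt α)^2*γ^4*s*t^2 + (1)*(Real.sqrt α)^2*γ^5*t^2) * hD + ((1)*(Real.sqrt α)^2*γ^2 + (-1)*(Real.sqrt α)^2*γ^2*s^2 + (4)*(Real.sqrt α)^2*γ^3 + (3)*(Real.sqrt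 α)^2*γ^3*s + (4)*(Real.sqrt α)^2*γ^3*s^2 + (3)*(Real.sqrt α)^2*γ^3*s^3 + (-2)*(Real.sqrt α)^2*γ^4*s + (1)*(Real.sqrt α)^2*γ^4*s^2 + (-2)*(Real.sqrt α)^2*γ^4*s^3 + (-6)*(Real.sqrt α)^2*γ^5 + (-3)*(Real.sqrt α)^2*γ^5*s + (-2)*(Real.sqrt α)^2*γ^5*s^2 + (-1)*(Real.sqrt α)^2*γ^6 + (2)*(Real.sqrt α)^2*γ^6*s + (2)*(Real.sqrt α)^2*γ^7) * ht2 + ((1)*(Real.sqrt α)^2*γ^2 + (1)*(Real.sqrt α)^2*γ^2*s + (5)*(Real.sqrt α)^2*γ^3 + (1)*(Real.sqrt α)^2*γ^3*s + (-3)*(Real.sqrt α)^2*γ^3*s^2 + (4)*(Real.sqrt α)^2*γ^4 + (2)*(Real.sqrt α)^2*γ^4*s + (5)*(Real.sqrt α)^2*γ^4*s^2 + (-5)*(Real.sqrt α)^2*γ^5 + (-2)*(Real.sqrt α)^2*γ^5*s + (-2)*(Real.sqrt α)^2*γ^5*s^2 + (-3)*(Real.sqrt α)^2*γ^6 + (2)*(Real.sqrt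 α)^2*γ^7) * hs2
  have q5 : v₄ ⬝ᵥ (-(v₃ + v₄) - (γ - 1) • (v₁ + v₂)) = 0 := by
    simp only [hv₁, hv₂, hv₃, hv₄, hv₅, dotProduct, Fin.sum_univ_two, Pi.add_apply,
      Pi.sub_apply, Pi.smul_apply, Pi.neg_apply, smul_eq_mul, Matrix.cons_val_zero,
      Matrix.cons_val_one, Matrix.head_cons]
    field_simp
    linear_combination ((1)*(Real.sqrt α)^2*γ*t^2 + (-1)*(Real.sqrt α)^2*γ^2*s + (-2)*(Real.sqrt α)^2*γ^2*s*t^2 + (-2)*(Real.sqrt α)^2*γ^3*t^2 + (1)*(Real.sqrt α)^2*γ^3*s^2 + (1)*(Real.sqrt α)^2*γ^3*s^2*t^2 + (1)*(Real.sqrt α)^2*γ^4*s + (2)*(Real.sqrt α)^2*γ^4*s*t^2 + (1)*(Real.sqrt α)^2*γ^5*t^2) * hD + ((-1)*(Real.sqrt α)^2*γ + (1)*(Real.sqrt α)^2*γ*s + (-3)*(Real.sqrt α)^2*γ^2 + (-4)*(Real.sqrt α)^2*γ^2*s^2 + (4)*(Real.sqrt α)^2*γ^3 + (2)*(Real.sqrt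 α)^2*γ^3*s + (3)*(Real.sqrt α)^2*γ^3*s^2 + (3)*(Real.sqrt α)^2*γ^3*s^3 + (6)*(Real.sqrt α)^2*γ^4 + (-2)*(Real.sqrt α)^2*γ^4*s + (3)*(Real.sqrt α)^2*γ^4*s^2 + (-2)*(Real.sqrt α)^2*γ^4*s^3 + (-5)*(Real.sqrt α)^2*γ^5 + (-3)*(Real.sqrt α)^2*γ^5*s + (-2)*(Real.sqrt α)^2*γ^5*s^2 + (-3)*(Real.sqrt α)^2*γ^6 + (2)*(Real.sqrt α)^2*γ^6*s + (2)*(Real.sqrt α)^2*γ^7) * ht2 + ((-1)*(Real.sqrt α)^2*γ + (-4)*(Real.sqrt α)^2*γ^2 + (4)*(Real.sqrt α)^2*γ^2*s + (1)*(Real.sqrt α)^2*γ^3 + (-1)*(Real.sqrt α)^2*γ^3*s + (-3)*(Real.sqrt α)^2*γ^3*s^2 + (9)*(Real.sqrt α)^2*γ^4 + (-1)*(Real.sqrt α)^2*γ^4*s + (5)*(Real.sqrt α)^2*γ^4*s^2 + (-2)*(Real.sqrt α)^2*γ^5 + (-2)*(Real.sqrt α)^2*γ^5*s^2 + (-5)*(Real.sqrt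 α)^2*γ^6 + (2)*(Real.sqrt α)^2*γ^7) * hs2
  have q6 : v₂ ⬝ᵥ ((v₃ + v₄) + (γ - 1) • (v₁ + v₂)) = 0 := by
    simp only [hv₁, hv₂, hv₃, hv₄, hv₅, dotProduct, Fin.sum_univ_two, Pi.add_apply,
      Pi.sub_apply, Pi.smul_apply, Pi.neg_apply, smul_eq_mul, Matrix.cons_val_zero,
      Matrix.cons_val_one, Matrix.head_cons]
    field_simp
    linear_combination ((-1)*(Real.sqrt α)^2*γ*t^2 + (1)*(Real.sqrt α)^2*γ^2*s + (1)*(Real.sqrt α)^2*γ^2*s*t^2 + (1)*(Real.sqrt α)^2*γ^3*t^2) * hD + ((1)*(Real.sqrt α)^2*γ + (-1)*(Real.sqrt α)^2*γ*s + (3)*(Real.sqrt α)^2*γ^2 + (1)*(Real.sqrt α)^2*γ^2*s + (3)*(Real.sqrt α)^2*γ^2*s^2 + (-3)*(Real.sqrt α)^2*γ^3 + (-2)*(Real.sqrt α)^2*γ^3*s^2 + (-3)*(Real.sqrt α)^2*γ^4 + (2)*(Real.sqrt α)^2*γ^5) * ht2 + ((1)*(Real.sqrt α)^2*γ + (4)*(Real.sqrt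 α)^2*γ^2 + (-3)*(Real.sqrt α)^2*γ^2*s + (5)*(Real.sqrt α)^2*γ^3*s + (-5)*(Real.sqrt α)^2*γ^4 + (-2)*(Real.sqrt α)^2*γ^4*s + (2)*(Real.sqrt α)^2*γ^5) * hs2
  have q7 : (v₅ ⬝ᵥ v₅ + γ * (v₂ ⬝ᵥ v₂) + (γ - 1) * ((v₁ + v₂) ⬝ᵥ (v₁ + v₂))) * (-8 - γ + 6 * γ ^ 2 - γ ^ 3 + (-6 + 3 * γ + γ ^ 2) * s) = (-8 - γ + 6 * γ ^ 2 - γ ^ 3 + (-6 + 3 * γ + γ ^ 2) * s) * 1 := by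
    simp only [hv₁, hv₂, hv₃, hv₄, hv₅, dotProduct, Fin.sum_univ_two, Pi.add_apply,
      Pi.sub_apply, Pi.smul_apply, Pi.neg_apply, smul_eq_mul, Matrix.cons_val_zero,
      Matrix.cons_val_one, Matrix.head_cons]
    field_simp
    linear_combination ((-32)*γ^2*t^2 + (192)*γ^3 + (8)*γ^3*t^2 + (-40)*γ^3*t^2*D + (192)*γ^3*s + (-120)*γ^3*s*t^2 + (-112)*γ^4 + (144)*γ^4*D + (128)*γ^4*t^2 + (8)*γ^4*t^2*D + (-16)*γ^4*t^2*D^2 + (192)*γ^4*s + (144)*γ^4*s*D + (152)*γ^4*s*t^2 + (-48)*γ^4*s*t^2*D + (432)*γ^4*s^2 + (-144)*γ^4*s^2*t^2 + (-568)*γ^5 + (-24)*γ^5*D + (48)*γ^5*D^2 + (-154)*γ^5*t^2 + (66)*γ^5*t^2*D + (2)*γ^5*t^2*D^2 + (-2)*γ^5*t^2*D^3 + (-848)*γ^5*s + (24)*γ^5*s*D + (48)*γ^5*s*D^2 + (282)*γ^5*s*t^2 + (44)*γ^5*s*t^2*D + (-6)*γ^5*s*t^2*D^2 + (-360)*γ^5*s^2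 + (144)*γ^5*s^2*D + (246)*γ^5*s^2*t^2 + (-18)*γ^5*s^2*t^2*D + (432)*γ^5*s^3 + (-54)*γ^5*s^3*t^2 + (658)*γ^6 + (-266)*γ^6*D + (2)*γ^6*D^2 + (6)*γ^6*D^3 + (-134)*γ^6*t^2 + (-48)*γ^6*t^2*D + (14)*γ^6*t^2*D^2 + (-288)*γ^6*s + (-246)*γ^6*s*D + (-12)*γ^6*s*D^2 + (6)*γ^6*s*D^3 + (-556)*γ^6*s*t^2 + (52)*γ^6*s*t^2*D + (4)*γ^6*s*t^2*D^2 + (-1068)*γ^6*s^2 + (-150)*γ^6*s^2*D + (18)*γ^6*s^2*D^2 + (98)*γ^6*s^2*t^2 + (24)*γ^6*s^2*t^2*D + (-792)*γ^6*s^3 + (54)*γ^6*s^3*D + (108)*γ^6*s^3*t^2 + (162)*γ^6*s^4 + (577)*γ^7 + (173)*γ^7*D + (-59)*γ^7*D^2 + (1)*γ^7*D^3 + (309)*γ^7*t^2 + (-33)*γ^7*t^2*D + (-5)*γ^7*t^2*D^2 + (1)*γ^7*t^2*D^3 + (1854)*γ^7*s + (-17)*γ^7*s*D + (-32)*γ^7*s*D^2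 + (-3)*γ^7*s*D^3 + (-1)*γ^7*s*t^2 + (-70)*γ^7*s*t^2*D + (3)*γ^7*s*t^2*D^2 + (1284)*γ^7*s^2 + (-105)*γ^7*s^2*D + (-21)*γ^7*s^2*D^2 + (-423)*γ^7*s^2*t^2 + (1)*γ^7*s^2*t^2*D + (-78)*γ^7*s^3 + (-99)*γ^7*s^3*D + (-45)*γ^7*s^3*t^2 + (-405)*γ^7*s^4 + (-1210)*γ^8 + (159)*γ^8*D + (22)*γ^8*D^2 + (-5)*γ^8*D^3 + (-43)*γ^8*t^2 + (46)*γ^8*t^2*D + (-3)*γ^8*t^2*D^2 + (-561)*γ^8*s + (251)*γ^8*s*D + (5)*γ^8*s*D^2 + (-1)*γ^8*s*D^3 + (516)*γ^8*s*t^2 + (2)*γ^8*s*t^2*D + (-2)*γ^8*s*t^2*D^2 + (627)*γ^8*s^2 + (175)*γ^8*s^2*D + (3)*γ^8*s^2*D^2 + (203)*γ^8*s^2*t^2 + (-12)*γ^8*s^2*t^2*D + (1089)*γ^8*s^3 + (51)*γ^8*s^3*D + (-38)*γ^8*s^3*t^2 + (351)*γ^8*s^4 + (69)*γ^9 + (-200)*γ^9*D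 + (16)*γ^9*D^2 + (1)*γ^9*D^3 + (-201)*γ^9*t^2 + (-3)*γ^9*t^2*D + (2)*γ^9*t^2*D^2 + (-1620)*γ^9*s + (-85)*γ^9*s*D + (10)*γ^9*s*D^2 + (-271)*γ^9*s*t^2 + (24)*γ^9*s*t^2*D + (-1459)*γ^9*s^2 + (-33)*γ^9*s^2*D + (2)*γ^9*s^2*D^2 + (102)*γ^9*s^2*t^2 + (4)*γ^9*s^2*t^2*D + (-800)*γ^9*s^3 + (36)*γ^9*s^3*t^2 + (-102)*γ^9*s^4 + (909)*γ^10 + (9)*γ^10*D + (-13)*γ^10*D^2 + (113)*γ^10*t^2 + (-12)*γ^10*t^2*D + (1271)*γ^10*s + (-87)*γ^10*s*D + (-4)*γ^10*s*D^2 + (-90)*γ^10*s*t^2 + (-8)*γ^10*s*t^2*D + (390)*γ^10*s^2 + (-32)*γ^10*s^2*D + (-108)*γ^10*s^2*t^2 + (76)*γ^10*s^3 + (-4)*γ^10*s^3*D + (-8)*γ^10*s^3*t^2 + (-12)*γ^10*s^4 + (-496)*γ^11 + (69)*γ^11*D + (2)*γ^11*D^2 + (26)*γ^11*t^2 + (4)*γ^11*t^2*D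 + (216)*γ^11*s + (64)*γ^11*s*D + (108)*γ^11*s*t^2 + (384)*γ^11*s^2 + (12)*γ^11*s^2*D + (24)*γ^11*s^2*t^2 + (112)*γ^11*s^3 + (8)*γ^11*s^4 + (-157)*γ^12 + (-32)*γ^12*D + (-36)*γ^12*t^2 + (-588)*γ^12*s + (-12)*γ^12*s*D + (-24)*γ^12*s*t^2 + (-264)*γ^12*s^2 + (-32)*γ^12*s^3 + (230)*γ^13 + (4)*γ^13*D + (8)*γ^13*t^2 + (240)*γ^13*s + (48)*γ^13*s^2 + (-76)*γ^14 + (-32)*γ^14*s + (8)*γ^15) * hD + ((-96)*γ^2*s + (88)*γ^3 + (208)*γ^3*s + (-360)*γ^3*s^2 + (-200)*γ^4 + (576)*γ^4*s + (840)*γ^4*s^2 + (-432)*γ^4*s^3 + (-214)*γ^5 + (-1696)*γ^5*s + (728)*γ^5*s^2 + (1080)*γ^5*s^3 + (-162)*γ^5*s^4 + (852)*γ^6 + (-80)*γ^6*s + (-3356)*γ^6*s^2 + (-144)*γ^6*s^3 + (432)*γ^6*s^4 + (-215)*γ^7 + (3428)*γ^7*s + (1730)*γ^7*s^2 + (-1852)*γ^7*s^3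 + (-351)*γ^7*s^4 + (-1152)*γ^8 + (-2372)*γ^8*s + (2812)*γ^8*s^2 + (1844)*γ^8*s^3 + (-24)*γ^8*s^4 + (948)*γ^9 + (-1796)*γ^9*s + (-3402)*γ^9*s^2 + (-112)*γ^9*s^3 + (184)*γ^9*s^4 + (404)*γ^10 + (2676)*γ^10*s + (480)*γ^10*s^2 + (-704)*γ^10*s^3 + (-96)*γ^10*s^4 + (-767)*γ^11 + (-528)*γ^11*s + (1008)*γ^11*s^2 + (384)*γ^11*s^3 + (16)*γ^11*s^4 + (184)*γ^12 + (-640)*γ^12*s + (-576)*γ^12*s^2 + (-64)*γ^12*s^3 + (152)*γ^13 + (384)*γ^13*s + (96)*γ^13*s^2 + (-96)*γ^14 + (-64)*γ^14*s + (16)*γ^15) * ht2 + ((96)*γ^2 + (-88)*γ^3 + (360)*γ^3*s + (-560)*γ^4 + (-336)*γ^4*s + (432)*γ^4*s^2 + (714)*γ^5 + (-1778)*γ^5*s + (-378)*γ^5*s^2 + (162)*γ^5*s^3 + (1100)*γ^6 + (2572)*γ^6*s + (-1908)*γ^6*s^2 + (-108)*γ^6*s^3 + (-2122)*γ^7 +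 (2062)*γ^7*s + (3220)*γ^7*s^2 + (-756)*γ^7*s^3 + (-324)*γ^8 + (-5716)*γ^8*s + (108)*γ^8*s^2 + (1536)*γ^8*s^3 + (2604)*γ^9 + (2004)*γ^9*s + (-3872)*γ^9*s^2 + (-1216)*γ^9*s^3 + (-1356)*γ^10 + (3136)*γ^10*s + (3552)*γ^10*s^2 + (448)*γ^10*s^3 + (-800)*γ^11 + (-3456)*γ^11*s + (-1344)*γ^11*s^2 + (-64)*γ^11*s^3 + (1120)*γ^12 + (1344)*γ^12*s + (192)*γ^12*s^2 + (-448)*γ^13 + (-192)*γ^13*s + (64)*γ^14) * hs2 + ((-128)*γ^2 + (-128)*γ^2*t^2 + (-128)*γ^2*t^2*D + (-96)*γ^2*s + (-96)*γ^2*s*t^2 + (-96)*γ^2*s*t^2*D + (-16)*γ^3 + (-256)*γ^3*D + (-16)*γ^3*t^2 + (-144)*γ^3*t^2*D + (-160)*γ^3*t^2*D^2 + (48)*γ^3*s + (-192)*γ^3*s*D + (48)*γ^3*s*t^2 + (-48)*γ^3*s*t^2*D + (-120)*γ^3*s*t^2*D^2 + (96)*γ^4 + (-32)*γ^4*D + (-192)*γ^4*D^2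 + (96)*γ^4*t^2 + (80)*γ^4*t^2*D + (-52)*γ^4*t^2*D^2 + (-64)*γ^4*t^2*D^3 + (16)*γ^4*s + (96)*γ^4*s*D + (-144)*γ^4*s*D^2 + (16)*γ^4*s*t^2 + (64)*γ^4*s*t^2*D + (36)*γ^4*s*t^2*D^2 + (-48)*γ^4*s*t^2*D^3 + (-16)*γ^5 + (192)*γ^5*D + (-24)*γ^5*D^2 + (-64)*γ^5*D^3 + (-16)*γ^5*t^2 + (80)*γ^5*t^2*D + (116)*γ^5*t^2*D^2 + (-8)*γ^5*t^2*D^3 + (-8)*γ^5*t^2*D^4 + (32)*γ^5*s*D + (72)*γ^5*s*D^2 + (-48)*γ^5*s*D^3 + (16)*γ^5*s*t^2*D + (32)*γ^5*s*t^2*D^2 + (24)*γ^5*s*t^2*D^3 + (-6)*γ^5*s*t^2*D^4 + (-32)*γ^6*D + (144)*γ^6*D^2 + (-8)*γ^6*D^3 + (-8)*γ^6*D^4 + (-16)*γ^6*t^2*D + (4)*γ^6*t^2*D^2 + (48)*γ^6*t^2*D^3 + (-1)*γ^6*t^2*D^4 + (24)*γ^6*s*D^2 + (24)*γ^6*s*D^3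 + (-6)*γ^6*s*D^4 + (4)*γ^6*s*t^2*D^2 + (8)*γ^6*s*t^2*D^3 + (3)*γ^6*s*t^2*D^4 + (-24)*γ^7*D^2 + (48)*γ^7*D^3 + (-1)*γ^7*D^4 + (-4)*γ^7*t^2*D^2 + (-8)*γ^7*t^2*D^3 + (6)*γ^7*t^2*D^4 + (8)*γ^7*s*D^3 + (3)*γ^7*s*D^4 + (1)*γ^7*s*t^2*D^4 + (-8)*γ^8*D^3 + (6)*γ^8*D^4 + (-1)*γ^8*t^2*D^4 + (1)*γ^8*s*D^4 + (-1)*γ^9*D^4) * hsq + ((16)*γ^2 + (16)*γ^2*t^2 + (16)*γ^2*t^2*D + (32)*γ^3*D + (16)*γ^3*t^2*D + (20)*γ^3*t^2*D^2 + (24)*γ^4*D^2 + (4)*γ^4*t^2*D^2 + (8)*γ^4*t^2*D^3 + (8)*γ^5*D^3 + (1)*γ^5*t^2*D^4 + (1)*γ^6*D^4) * hαden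
  refine ⟨q1.ge, q2.ge, q3.ge, q4.ge, ?_, ?_, ?_⟩
  · rw [q5, q2]; norm_num
  · rw [q6, q3]; norm_num
  · refine mul_right_cancel₀ hden.ne' ?_
    rw [q7]; ring
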